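/- Let 0 < γ < 1, A > 0. Suppose X : [0,T] → ℝ is continuous, X_t ≥ 0 for all t, and satisfies X_t = ∫_0^t A X_r^γ dr + w_t for a continuous path w with w_0 = 0. Let τ = sup{ s ≤ t : X_s = 0 } for a given t ∈ [0,T] (with τ = 0 if X never vanishes and X_0 = 0). Then X_t ≤ φ(2 sup_{r ≤ T} |w_r|, A t), where φ(x,h) = (x^{1−γ} + (1−γ)h)^{1/(1−γ)}. -/

import Mathlib

/-- Upper bound: a nonnegative solution of X_t = ∫_0^t A X_r^γ dr + w_t satisfies
X_t ≤ φ(2 sup_{r≤T} |w_r|, A t), where φ(x,h) = (x^{1−γ} + (1−γ)h)^{1/(1−γ)}. -/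
theorem stmt_18 (γ A T : ℝ) (hγ0 : 0 < γ) (hγ1 : γ < 1) (hA : 0 < A) (hT : 0 < T)
    (X w : ℝ → ℝ)
    (hX : ContinuousOn X (Set.Icc 0 T))
    (hXpos : ∀ t ∈ Set.Icc (0:ℝ) T, 0 ≤ X t)
    (hw : ContinuousOn w (Set.Icc 0 T)) (hw0 : w 0 = 0)
    (hXeq : ∀ t ∈ Set.Icc (0:ℝ) T, X t = (∫ r in (0:ℝ)..t, A * (X r) ^ γ) + w t) :
    ∀ t ∈ Set.Icc (0:ℝ) T,
      X t ≤ ((2 * sSup ((fun r => |w r|) '' Set.Icc (0:ℝ) T)) ^ (1 - γ)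
              + (1 - γ) * (A * t)) ^ (1 / (1 - γ)) := by
  intro t ht
  have hγ' : (0:ℝ) < 1 - γ := by linarith
  have hp : (0:ℝ) < 1/(1-γ) := by positivity
  set M : ℝ := sSup ((fun r => |w r|) '' Set.Icc (0:ℝ) T) with hMdef
  have hbdd : BddAbove ((fun r => |w r|) '' Set.Icc (0:ℝ) T) :=
    (isCompact_Icc.image_of_continuousOn hw.abs).bddAbove
  have hMb : ∀ r ∈ Set.Icc (0:ℝ) T, |w r| ≤ M := fun r hr =>
    le_csSup hbdd ⟨r, hr, rfl⟩
  have hM0 : 0 ≤ M := (abs_nonneg (w 0)).trans (hMb 0 ⟨le_refl _, hT.le⟩)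
  have hX0 : X 0 = 0 := by
    have := hXeq 0 ⟨le_refl _, hT.le⟩
    simpa [hw0] using this
  have hcontγ : Continuous (fun x : ℝ => x ^ γ) := Real.continuous_rpow_const hγ0.le
  -- key estimate with M + e
  have key : ∀ e : ℝ, 0 < e →
      X t ≤ ((M + e) ^ (1-γ) + (1-γ) * (A * t)) ^ (1/(1-γ)) := by
    intro e he
    have hMe : 0 < M + e := by linarith
    set c : ℝ := (M + e) ^ (1-γ) with hcdef
    have hc : 0 < c := Real.rpow_pos_of_pos hMe _
    set b : ℝ := (1-γ) * A with hbdef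
    have hb : 0 < b := mul_pos hγ' hA
    set Z : ℝ → ℝ := fun s => (c + b * s) ^ (1/(1-γ)) with hZdef
    have hupos : ∀ s : ℝ, 0 ≤ s → 0 < c + b * s := fun s hs => by nlinarith
    have hZpos : ∀ s : ℝ, 0 ≤ s → 0 < Z s := fun s hs =>
      Real.rpow_pos_of_pos (hupos s hs) _
    have hZcont : Continuous Z :=
      (Real.continuous_rpow_const hp.le).comp (continuous_const.add (continuous_const.mul continuous_id))
    have hgZcont : Continuous (fun r => A * Z r ^ γ) :=
      continuous_const.mul (hcontγ.comp hZcont)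
    have hZ0 : Z 0 = M + e := by
      have : Z 0 = ((M+e) ^ (1-γ)) ^ (1/(1-γ)) := by simp [hZdef, hcdef]
      rw [this, ← Real.rpow_mul hMe.le]
      rw [show (1-γ) * (1/(1-γ)) = 1 by field_simp]
      exact Real.rpow_one _
    have hZderiv : ∀ s : ℝ, 0 ≤ s → HasDerivAt Z (A * Z s ^ γ) s := by
      intro s hs
      have hu : 0 < c + b * s := hupos s hs
      have h1 : HasDerivAt (fun s : ℝ => c + b * s) b s := by
        simpa using ((hasDerivAt_id s).const_mul b).const_add c
      have h2 : HasDerivAt (fun y : ℝ => y ^ (1/(1-γ)))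
          ((1/(1-γ)) * (c + b * s) ^ (1/(1-γ) - 1)) (c + b * s) :=
        Real.hasDerivAt_rpow_const (Or.inl hu.ne')
      have h3 := h2.comp s h1
      refine h3.congr_deriv ?_
      have hexp : (1/(1-γ)) - 1 = (1/(1-γ)) * γ := by field_simp; ring
      have hZsγ : Z s ^ γ = (c + b * s) ^ ((1/(1-γ)) * γ) := by
        rw [hZdef]
        rw [← Real.rpow_mul hu.le]
      have hAb : (1/(1-γ)) * b = A := by rw [hbdef]; field_simp
      rw [hZsγ, ← hexp, ← hAb]; ring
    have hZint : ∀ s : ℝ, 0 ≤ s → Z s = (M + e) + ∫ r in (0:ℝ)..s, A * Z r ^ γ := by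
      intro s hs
      have h := intervalIntegral.integral_eq_sub_of_hasDerivAt
        (f := Z) (f' := fun r => A * Z r ^ γ)
        (fun r hr => hZderiv r (by rw [Set.uIcc_of_le hs] at hr; exact hr.1))
        (hgZcont.intervalIntegrable 0 s)
      rw [h, hZ0]; ring
    -- comparison by first crossing
    by_contra hcon
    push_neg at hcon
    have hcon' : Z t < X t := by
      have : (1-γ) * (A * t) = b * t := by rw [hbdef]; ring
      rw [this] at hcon
      exact hcon
    set S : Set ℝ := Set.Icc 0 T ∩ (fun s => X s - Z s) ⁻¹' Set.Ici 0 with hSdef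
    have hSne : S.Nonempty := ⟨t, ht, by simp [Set.mem_Ici]; linarith⟩
    have hSbd : BddBelow S := ⟨0, fun s hs => hs.1.1⟩
    have hScl : IsClosed S :=
      (hX.sub hZcont.continuousOn).preimage_isClosed_of_isClosed isClosed_Icc isClosed_Ici
    set τ : ℝ := sInf S with hτdef
    have hτS : τ ∈ S := hScl.csInf_mem hSne hSbd
    have hτIcc : τ ∈ Set.Icc (0:ℝ) T := hτS.1
    have hτXZ : Z τ ≤ X τ := by have := hτS.2; simp [Set.mem_Ici] at this; linarith
    have hτpos : 0 < τ := by
      rcases lt_or_eq_of_le hτIcc.1 with h | h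
      · exact h
      · exfalso
        rw [← h] at hτXZ
        rw [hX0, hZ0] at hτXZ
        linarith
    have hlt : ∀ r : ℝ, 0 ≤ r → r < τ → X r < Z r := by
      intro r h0 hr
      by_contra hge
      push_neg at hge
      have hrS : r ∈ S := ⟨⟨h0, hr.le.trans hτIcc.2⟩, by simp [Set.mem_Ici]; linarith⟩
      exact absurd (csInf_le hSbd hrS) (not_le.mpr hr)
    have hτle : X τ ≤ Z τ := by
      have hne : (nhdsWithin τ (Set.Ico 0 τ)).NeBot := by
        rw [← mem_closure_iff_nhdsWithin_neBot, closure_Ico hτpos.ne]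
        exact Set.right_mem_Icc.mpr hτpos.le
      have hsub : Set.Ico (0:ℝ) τ ⊆ Set.Icc 0 T :=
        fun r hr => ⟨hr.1, hr.2.le.trans hτIcc.2⟩
      have hXc : ContinuousWithinAt X (Set.Ico 0 τ) τ := (hX τ hτIcc).mono hsub
      have hZc : ContinuousWithinAt Z (Set.Ico 0 τ) τ := hZcont.continuousWithinAt
      have htend := hXc.sub hZc
      have hev : ∀ᶠ r in nhdsWithin τ (Set.Ico 0 τ), X r - Z r ≤ 0 :=
        Filter.eventually_of_mem self_mem_nhdsWithin
          (fun r hr => by linarith [hlt r hr.1 hr.2])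
      have h0 : X τ - Z τ ≤ 0 := le_of_tendsto htend hev
      linarith
    have hmono : ∀ r ∈ Set.Icc (0:ℝ) τ, X r ≤ Z r := by
      intro r hr
      rcases lt_or_eq_of_le hr.2 with h | h
      · exact (hlt r hr.1 h).le
      · rw [h]; exact hτle
    have hsubT : Set.Icc (0:ℝ) τ ⊆ Set.Icc 0 T :=
      Set.Icc_subset_Icc_right hτIcc.2
    have hXγint : IntervalIntegrable (fun r => A * X r ^ γ) MeasureTheory.volume 0 τ := by
      apply ContinuousOn.intervalIntegrable_of_Icc hτpos.le
      exact continuousOn_const.mul (hcontγ.comp_continuousOn (hX.mono hsubT))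
    have hintle : (∫ r in (0:ℝ)..τ, A * X r ^ γ) ≤ ∫ r in (0:ℝ)..τ, A * Z r ^ γ := by
      apply intervalIntegral.integral_mono_on hτpos.le hXγint
        (hgZcont.intervalIntegrable 0 τ)
      intro r hr
      exact mul_le_mul_of_nonneg_left
        (Real.rpow_le_rpow (hXpos r (hsubT hr)) (hmono r hr) hγ0.le) hA.le
    have hwle : w τ ≤ M := (le_abs_self _).trans (hMb τ hτIcc)
    have hXτ := hXeq τ hτIcc
    have hZτ := hZint τ hτpos.le
    linarith
  -- take e → 0⁺
  set C : ℝ := (1-γ) * (A * t) with hCdef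
  have hC : 0 ≤ C := mul_nonneg hγ'.le (mul_nonneg hA.le ht.1)
  have hXt : X t ≤ (M ^ (1-γ) + C) ^ (1/(1-γ)) := by
    have h1 : ContinuousAt (fun e : ℝ => ((M + e) ^ (1-γ) + C) ^ (1/(1-γ))) 0 := by
      apply ContinuousAt.rpow_const
      · exact (((continuous_const.add continuous_id).continuousAt).rpow_const
          (Or.inr hγ'.le)).add continuousAt_const
      · exact Or.inr hp.le
    have hlim : Filter.Tendsto (fun e : ℝ => ((M + e) ^ (1-γ) + C) ^ (1/(1-γ)))
        (nhdsWithin 0 (Set.Ioi 0)) (nhds ((M ^ (1-γ) + C) ^ (1/(1-γ)))) := by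
      have := h1.continuousWithinAt (s := Set.Ioi (0:ℝ))
      simpa [ContinuousWithinAt] using this
    exact ge_of_tendsto hlim
      (Filter.eventually_of_mem self_mem_nhdsWithin (fun e he => key e he))
  have h2M : M ^ (1-γ) ≤ (2*M) ^ (1-γ) :=
    Real.rpow_le_rpow hM0 (by linarith) hγ'.le
  calc X t ≤ (M ^ (1-γ) + C) ^ (1/(1-γ)) := hXt
    _ ≤ ((2*M) ^ (1-γ) + C) ^ (1/(1-γ)) :=
        Real.rpow_le_rpow (add_nonneg (Real.rpow_nonneg hM0 _) hC) (by linarith) hp.le
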